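/- Fix θ ∈ [0,2π) with θ ≠ 0 and θ ≠ π, and set c = cos θ, s = sin θ. For every b ∈ (0, π) with cos b ≠ 0 and every x ∈ ℤ, (1/2π)·∫_{−π}^{π} e^{iax} / (2s²(1 − cos a · cos b) + (1−c)²·sin²b) da = (2s² + (1−c)²·sin²b − (1−c)·sin b·√((3+c)² − (1−c)²·cos²b))^{|x|} / ((1−c)·sin b·(2s²·cos b)^{|x|}·√((3+c)² − (1−c)²·cos²b)). -/

import Mathlib

open MeasureTheory Real intervalIntegral Complex

lemma exp_orth (k : ℤ) :
    ∫ a in (-π)..π, Complex.exp (Complex.I * k * a) = if k = 0 then 2 * (π:ℂ) else 0 := by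
  by_cases hk : k = 0
  · simp [hk, two_mul]
  · rw [if_neg hk]
    have hc : (Complex.I * k : ℂ) ≠ 0 := by
      simp [Complex.I_ne_zero, Complex.ext_iff]
      exact_mod_cast hk
    rw [integral_exp_mul_complex hc]
    have : Complex.exp (Complex.I * k * π) = Complex.exp (Complex.I * k * ((-π : ℝ) : ℂ)) := by
      rw [show (Complex.I * k * (π:ℂ)) = Complex.I * k * ((-π:ℝ):ℂ) + k * (2 * π * Complex.I) by
        push_cast; ring, Complex.exp_add, Complex.exp_int_mul_two_pi_mul_I, mul_one]
    rw [this, sub_self, zero_div]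

lemma norm_texp (t : ℝ) (a : ℝ) : ‖(t:ℂ) * Complex.exp (Complex.I * a)‖ = |t| := by
  simp [Complex.norm_exp]

lemma norm_texp' (t : ℝ) (a : ℝ) : ‖(t:ℂ) * Complex.exp (-(Complex.I * a))‖ = |t| := by
  simp [Complex.norm_exp]

lemma pointwise (t : ℝ) (ht : |t| < 1) (x : ℕ) (a : ℝ) :
    Complex.exp (Complex.I * x * a) *
      ((1 - t * Complex.exp (Complex.I * a))⁻¹ * (1 - t * Complex.exp (-(Complex.I * a)))⁻¹)
    = ∑' p : ℕ × ℕ, (t:ℂ) ^ (p.1 + p.2) *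
        Complex.exp (Complex.I * ((((x : ℤ) + p.1 - p.2 : ℤ)) : ℂ) * a) := by
  have h1 : ‖(t:ℂ) * Complex.exp (Complex.I * a)‖ < 1 := by rw [norm_texp]; exact ht
  have h2 : ‖(t:ℂ) * Complex.exp (-(Complex.I * a))‖ < 1 := by rw [norm_texp']; exact ht
  rw [← tsum_geometric_of_norm_lt_one h1, ← tsum_geometric_of_norm_lt_one h2,
    tsum_mul_tsum_of_summable_norm
      (by simpa [norm_pow] using summable_geometric_of_lt_one (norm_nonneg _) h1)
      (by simpa [norm_pow] using summable_geometric_of_lt_one (norm_nonneg _) h2),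
    ← tsum_mul_left]
  refine tsum_congr fun p => ?_
  rw [mul_pow, mul_pow, ← Complex.exp_nat_mul, ← Complex.exp_nat_mul]
  rw [show Complex.exp (Complex.I * x * a) * ((t:ℂ)^p.1 * Complex.exp (p.1 * (Complex.I * a)) *
      ((t:ℂ)^p.2 * Complex.exp (p.2 * (-(Complex.I * a)))))
    = (t:ℂ)^(p.1+p.2) * (Complex.exp (Complex.I * x * a) * Complex.exp (p.1 * (Complex.I * a)) *
        Complex.exp (p.2 * (-(Complex.I * a)))) by ring]
  rw [← Complex.exp_add, ← Complex.exp_add]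
  congr 2
  push_cast
  ring

lemma core (t : ℝ) (ht : |t| < 1) (x : ℕ) :
    ∫ a in (-π)..π, Complex.exp (Complex.I * x * a) *
      ((1 - t * Complex.exp (Complex.I * a))⁻¹ * (1 - t * Complex.exp (-(Complex.I * a)))⁻¹)
    = 2 * (π:ℂ) * (t:ℂ) ^ x / (1 - (t:ℂ) ^ 2) := by
  have hle : (-π : ℝ) ≤ π := by linarith [pi_pos]
  set F : ℕ × ℕ → ℝ → ℂ := fun p a =>
    (t:ℂ) ^ (p.1 + p.2) * Complex.exp (Complex.I * ((((x : ℤ) + p.1 - p.2 : ℤ)) : ℂ) * a) with hF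
  have hnorm : ∀ p a, ‖F p a‖ = |t| ^ (p.1 + p.2) := by
    intro p a
    simp [hF, Complex.norm_exp, abs_pow]
  -- each F p integrable on Ioc
  have hcont : ∀ p : ℕ × ℕ, Continuous (F p) := by
    intro p; fun_prop
  have hInt : ∀ p : ℕ × ℕ, Integrable (F p) (volume.restrict (Set.Ioc (-π) π)) := by
    intro p
    exact (hcont p).integrableOn_Ioc
  have hSum : Summable fun p : ℕ × ℕ => ∫ a in Set.Ioc (-π) π, ‖F p a‖ := by
    have : (fun p : ℕ × ℕ => ∫ a in Set.Ioc (-π) π, ‖F p a‖)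
        = fun p : ℕ × ℕ => (|t| ^ p.1 * |t| ^ p.2) * (2 * π) := by
      funext p
      simp only [hnorm]
      rw [MeasureTheory.setIntegral_const (|t| ^ (p.1 + p.2)), measureReal_def, Real.volume_Ioc, smul_eq_mul,
        ENNReal.toReal_ofReal (by linarith [pi_pos] : (0:ℝ) ≤ π - -π), pow_add]
      ring
    rw [this]
    exact ((summable_geometric_of_lt_one (abs_nonneg t) ht).mul_of_nonneg
      (summable_geometric_of_lt_one (abs_nonneg t) ht)
      (fun n => pow_nonneg (abs_nonneg t) n) (fun n => pow_nonneg (abs_nonneg t) n)).mul_right _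
  have key := integral_tsum_of_summable_integral_norm hInt hSum
  rw [intervalIntegral.integral_of_le hle]
  have hpt : ∀ a ∈ Set.Ioc (-π) π, Complex.exp (Complex.I * x * a) *
      ((1 - t * Complex.exp (Complex.I * a))⁻¹ * (1 - t * Complex.exp (-(Complex.I * a)))⁻¹)
      = ∑' p : ℕ × ℕ, F p a := fun a _ => pointwise t ht x a
  rw [setIntegral_congr_fun measurableSet_Ioc hpt, ← key]
  -- evaluate each integral
  have hval : ∀ p : ℕ × ℕ, ∫ a in Set.Ioc (-π) π, F p a
      = (t:ℂ) ^ (p.1 + p.2) * (if ((x:ℤ) + p.1 - p.2) = 0 then 2 * (π:ℂ) else 0) := by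
    intro p
    rw [← intervalIntegral.integral_of_le hle]
    simp only [hF]
    rw [intervalIntegral.integral_const_mul, exp_orth]
  simp only [hval]
  -- now compute the double sum
  have hsum2 : Summable fun p : ℕ × ℕ =>
      (t:ℂ) ^ (p.1 + p.2) * (if ((x:ℤ) + p.1 - p.2) = 0 then 2 * (π:ℂ) else 0) := by
    apply Summable.of_norm_bounded
      (g := fun p : ℕ × ℕ => (|t| ^ p.1 * |t| ^ p.2) * (2 * π))
    · exact ((summable_geometric_of_lt_one (abs_nonneg t) ht).mul_of_nonneg
        (summable_geometric_of_lt_one (abs_nonneg t) ht)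
        (fun n => pow_nonneg (abs_nonneg t) n) (fun n => pow_nonneg (abs_nonneg t) n)).mul_right _
    · intro p
      rw [norm_mul]
      rw [show ‖((t:ℂ)^(p.1+p.2))‖ = |t| ^ p.1 * |t| ^ p.2 by
        simp [norm_pow, pow_add]]
      apply mul_le_mul_of_nonneg_left _ (by positivity)
      split <;> simp [norm_mul, abs_of_pos pi_pos] <;> positivity
  rw [Summable.tsum_prod' hsum2 (fun n => by
    apply Summable.of_norm_bounded (g := fun m : ℕ => (|t| ^ n * |t| ^ m) * (2 * π))
    · exact ((summable_geometric_of_lt_one (abs_nonneg t) ht).mul_left _).mul_right _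
    · intro m
      rw [norm_mul, show ‖((t:ℂ)^(n+m))‖ = |t| ^ n * |t| ^ m by simp [norm_pow, pow_add]]
      apply mul_le_mul_of_nonneg_left _ (by positivity)
      split <;> simp [norm_mul, abs_of_pos pi_pos] <;> positivity)]
  have hinner : ∀ n : ℕ, (∑' m : ℕ, (t:ℂ) ^ (n + m) *
      (if ((x:ℤ) + n - m) = 0 then 2 * (π:ℂ) else 0))
      = (t:ℂ) ^ (2 * n + x) * (2 * (π:ℂ)) := by
    intro n
    have : ∀ m : ℕ, (t:ℂ) ^ (n + m) * (if ((x:ℤ) + n - m) = 0 then 2 * (π:ℂ) else 0)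
        = if m = n + x then (t:ℂ) ^ (2 * n + x) * (2 * (π:ℂ)) else 0 := by
      intro m
      by_cases h : m = n + x
      · subst h
        rw [if_pos (by push_cast; ring), if_pos rfl]
        ring_nf
      · rw [if_neg (by omega), if_neg h, mul_zero]
    rw [tsum_congr this, tsum_ite_eq]
  rw [tsum_congr hinner]
  have h2 : ‖((t:ℂ))^2‖ < 1 := by
    rw [norm_pow]
    simp only [Complex.norm_real, Real.norm_eq_abs]
    nlinarith [abs_nonneg t]
  calc ∑' n : ℕ, (t:ℂ) ^ (2 * n + x) * (2 * (π:ℂ))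
      = ∑' n : ℕ, (((t:ℂ)^2) ^ n) * ((t:ℂ) ^ x * (2 * (π:ℂ))) := by
        refine tsum_congr fun n => ?_
        rw [pow_add, pow_mul]
        ring
    _ = (1 - (t:ℂ)^2)⁻¹ * ((t:ℂ) ^ x * (2 * (π:ℂ))) := by
        rw [tsum_mul_right, tsum_geometric_of_norm_lt_one h2]
    _ = 2 * (π:ℂ) * (t:ℂ) ^ x / (1 - (t:ℂ) ^ 2) := by
        rw [div_eq_mul_inv]; ring

lemma exp_add_exp_neg (a : ℝ) :
    Complex.exp (Complex.I * a) + Complex.exp (-(Complex.I * a)) = 2 * (Real.cos a : ℂ) := by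
  rw [show (Complex.I * (a:ℂ)) = (a:ℂ) * Complex.I by ring, Complex.exp_mul_I,
    show (-((a:ℂ) * Complex.I)) = ((-a : ℝ) : ℂ) * Complex.I by push_cast; ring,
    Complex.exp_mul_I]
  push_cast
  simp [Complex.cos_neg, Complex.sin_neg, Complex.ofReal_cos]
  ring

lemma main_nat (A B : ℝ) (hB : B ≠ 0) (hAB : |B| < A) (x : ℕ) :
    ∫ a in (-π)..π, Complex.exp (Complex.I * x * a) / ((A - B * Real.cos a : ℝ) : ℂ)
    = ((2 * π * ((A - Real.sqrt (A^2 - B^2))/B)^x / Real.sqrt (A^2 - B^2) : ℝ) : ℂ) := by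
  have hBpos : 0 < |B| := abs_pos.2 hB
  have hA : 0 < A := lt_trans hBpos hAB
  have hABsq : 0 < A^2 - B^2 := by nlinarith [abs_nonneg B, _root_.sq_abs B]
  set s := Real.sqrt (A^2 - B^2) with hs
  have hs2 : s^2 = A^2 - B^2 := Real.sq_sqrt hABsq.le
  have hs0 : 0 < s := Real.sqrt_pos.2 hABsq
  have hB2 : 0 < B^2 := by positivity
  have hsA : s < A := by nlinarith [hB2, hs0.le]
  set t := (A - s)/B with htdef
  have ht0 : t ≠ 0 := div_ne_zero (by nlinarith) hB
  have htB : t * B = A - s := div_mul_cancel₀ _ hB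
  have ht : |t| < 1 := by
    rw [htdef, abs_div, abs_of_pos (by nlinarith : (0:ℝ) < A - s), div_lt_one hBpos]
    by_contra hcon
    push_neg at hcon
    have h1 : (A - s) * (A + s) = |B| ^ 2 := by nlinarith [_root_.sq_abs B, hs2]
    nlinarith [mul_le_mul hcon (le_of_lt (lt_trans hAB (by nlinarith : A < A + s)))
      (abs_nonneg B) (by nlinarith : (0:ℝ) ≤ A - s)]
  have hkey : B * (1 + t^2) = 2 * A * t := by
    rw [htdef]
    field_simp
    nlinarith
  have hBt : B * (1 - t^2) = 2 * t * s := by linear_combination hkey - 2*t*htB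
  have ht1 : (1:ℝ) - t^2 ≠ 0 := by
    intro h
    rw [h, mul_zero] at hBt
    nlinarith [mul_pos hs0 (abs_pos.2 ht0)]
  clear_value t
  have hfac : ∀ a : ℝ, ((A - B * Real.cos a : ℝ) : ℂ)
      = ((B / (2*t) : ℝ) : ℂ) * ((1 - (t:ℂ) * Complex.exp (Complex.I * a)) *
        (1 - (t:ℂ) * Complex.exp (-(Complex.I * a)))) := by
    intro a
    have hef : Complex.exp (Complex.I * a) * Complex.exp (-(Complex.I * a)) = 1 := by
      rw [← Complex.exp_add]; simp
    have hprod : (1 - (t:ℂ) * Complex.exp (Complex.I * a)) *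
        (1 - (t:ℂ) * Complex.exp (-(Complex.I * a)))
        = ((1 + t^2 - t * (2 * Real.cos a) : ℝ) : ℂ) := by
      have expand : (1 - (t:ℂ) * Complex.exp (Complex.I * a)) *
          (1 - (t:ℂ) * Complex.exp (-(Complex.I * a)))
          = 1 - (t:ℂ) * (Complex.exp (Complex.I * a) + Complex.exp (-(Complex.I * a)))
            + (t:ℂ)^2 * (Complex.exp (Complex.I * a) * Complex.exp (-(Complex.I * a))) := by
        ring
      rw [expand, hef, exp_add_exp_neg]
      push_cast; ring
    rw [hprod, ← Complex.ofReal_mul]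
    congr 1
    rw [div_mul_eq_mul_div, eq_div_iff (mul_ne_zero two_ne_zero ht0)]
    linear_combination -hkey
  have htz : ∀ a : ℝ, (1 - (t:ℂ) * Complex.exp (Complex.I * a)) ≠ 0 := by
    intro a h
    have h2 : ‖(t:ℂ) * Complex.exp (Complex.I * a)‖ = 1 := by
      have h3 : (t:ℂ) * Complex.exp (Complex.I * a) = 1 := by linear_combination -h
      rw [h3]; simp
    rw [norm_texp] at h2
    exact absurd h2 (ne_of_lt ht)
  have htz' : ∀ a : ℝ, (1 - (t:ℂ) * Complex.exp (-(Complex.I * a))) ≠ 0 := by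
    intro a h
    have h2 : ‖(t:ℂ) * Complex.exp (-(Complex.I * a))‖ = 1 := by
      have h3 : (t:ℂ) * Complex.exp (-(Complex.I * a)) = 1 := by linear_combination -h
      rw [h3]; simp
    rw [norm_texp'] at h2
    exact absurd h2 (ne_of_lt ht)
  have hcongr : ∀ a : ℝ, Complex.exp (Complex.I * x * a) / ((A - B * Real.cos a : ℝ) : ℂ)
      = ((2*t/B : ℝ) : ℂ) * (Complex.exp (Complex.I * x * a) *
        ((1 - (t:ℂ) * Complex.exp (Complex.I * a))⁻¹ *
         (1 - (t:ℂ) * Complex.exp (-(Complex.I * a)))⁻¹)) := by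
    intro a
    rw [hfac a, div_eq_mul_inv, mul_inv, mul_inv]
    have h2t : ((B / (2*t) : ℝ) : ℂ)⁻¹ = ((2*t/B : ℝ) : ℂ) := by
      rw [← Complex.ofReal_inv, inv_div]
    rw [h2t]
    ring
  rw [intervalIntegral.integral_congr (fun a _ => hcongr a), intervalIntegral.integral_const_mul,
    core t ht x]
  rw [show 2 * (π:ℂ) * (t:ℂ) ^ x / (1 - (t:ℂ) ^ 2) = ((2 * π * t ^ x / (1 - t^2) : ℝ) : ℂ) by
    push_cast; ring]
  rw [← Complex.ofReal_mul]
  congr 1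
  rw [div_mul_div_comm, div_eq_div_iff (mul_ne_zero hB ht1) (ne_of_gt hs0)]
  linear_combination (-(2*π*t^x)) * hBt

theorem residue_integral_formula (θ : ℝ) (hθ : θ ∈ Set.Ico 0 (2 * Real.pi))
    (hθ0 : θ ≠ 0) (hθpi : θ ≠ Real.pi) (b : ℝ) (hb : b ∈ Set.Ioo 0 Real.pi)
    (hcb : Real.cos b ≠ 0) (x : ℤ) :
    (1 / (2 * (Real.pi : ℂ))) *
      ∫ a in (-Real.pi)..Real.pi,
        Complex.exp (Complex.I * a * x) /
          ((2 * Real.sin θ ^ 2 * (1 - Real.cos a * Real.cos b)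
            + (1 - Real.cos θ) ^ 2 * Real.sin b ^ 2 : ℝ) : ℂ)
    = (((2 * Real.sin θ ^ 2 + (1 - Real.cos θ) ^ 2 * Real.sin b ^ 2
          - (1 - Real.cos θ) * Real.sin b *
            Real.sqrt ((3 + Real.cos θ) ^ 2 - (1 - Real.cos θ) ^ 2 * Real.cos b ^ 2)) ^ x.natAbs /
        ((1 - Real.cos θ) * Real.sin b * (2 * Real.sin θ ^ 2 * Real.cos b) ^ x.natAbs *
          Real.sqrt ((3 + Real.cos θ) ^ 2 - (1 - Real.cos θ) ^ 2 * Real.cos b ^ 2)) : ℝ) : ℂ) := by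
  obtain ⟨hθ0', hθ2⟩ := hθ
  obtain ⟨hb0, hbπ⟩ := hb
  have hπ := Real.pi_pos
  have hsb : 0 < Real.sin b := Real.sin_pos_of_pos_of_lt_pi hb0 hbπ
  have hc1 : Real.cos θ < 1 := by
    rcases lt_or_eq_of_le (Real.cos_le_one θ) with h | h
    · exact h
    · exact absurd ((Real.cos_eq_one_iff_of_lt_of_lt (by linarith) (by linarith)).1 h) hθ0
  have hsθ : Real.sin θ ≠ 0 := by
    intro h
    obtain ⟨n, hn⟩ := Real.sin_eq_zero_iff.1 h
    have h0 : 0 ≤ n := by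
      by_contra h
      push_neg at h
      have hle : (n:ℝ) ≤ -1 := by exact_mod_cast (by omega : n ≤ -1)
      nlinarith
    have h2 : n < 2 := by
      by_contra h
      push_neg at h
      have hle : (2:ℝ) ≤ (n:ℝ) := by exact_mod_cast h
      nlinarith
    interval_cases n
    · simp at hn; exact hθ0 hn.symm
    · simp at hn; exact hθpi hn.symm
  have hsθ2 : 0 < Real.sin θ ^ 2 := by positivity
  set A : ℝ := 2 * Real.sin θ ^ 2 + (1 - Real.cos θ) ^ 2 * Real.sin b ^ 2 with hA
  set B : ℝ := 2 * Real.sin θ ^ 2 * Real.cos b with hBdef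
  have hBne : B ≠ 0 := by
    rw [hBdef]; positivity
  have hBabs : |B| = 2 * Real.sin θ ^ 2 * |Real.cos b| := by
    rw [hBdef, abs_mul, abs_of_pos (by positivity : (0:ℝ) < 2 * Real.sin θ ^ 2)]
  have hABlt : |B| < A := by
    rw [hBabs, hA]
    have e1 : 2 * Real.sin θ ^ 2 * |Real.cos b| ≤ 2 * Real.sin θ ^ 2 * 1 := by
      nlinarith [abs_cos_le_one b]
    have e2 : 0 < (1 - Real.cos θ) ^ 2 * Real.sin b ^ 2 :=
      mul_pos (pow_pos (by linarith) 2) (pow_pos hsb 2)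
    linarith
  -- rewrite the denominator
  have hD : ∀ a : ℝ, ((2 * Real.sin θ ^ 2 * (1 - Real.cos a * Real.cos b)
      + (1 - Real.cos θ) ^ 2 * Real.sin b ^ 2 : ℝ) : ℂ) = ((A - B * Real.cos a : ℝ) : ℂ) := by
    intro a
    rw [Complex.ofReal_inj, hA, hBdef]
    ring
  set n : ℕ := x.natAbs with hn
  have hx : (∫ a in (-π)..π, Complex.exp (Complex.I * a * x) /
        ((2 * Real.sin θ ^ 2 * (1 - Real.cos a * Real.cos b)
          + (1 - Real.cos θ) ^ 2 * Real.sin b ^ 2 : ℝ) : ℂ))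
      = ∫ a in (-π)..π, Complex.exp (Complex.I * n * a) / ((A - B * Real.cos a : ℝ) : ℂ) := by
    rcases le_or_gt 0 x with hx0 | hx0
    · have h' : ((n : ℕ) : ℤ) = x := Int.natAbs_of_nonneg hx0
      have hxe : ((n : ℕ) : ℂ) = ((x : ℤ) : ℂ) := by
        rw [← h', Int.cast_natCast]
      refine intervalIntegral.integral_congr fun a _ => ?_
      rw [hD a, hxe]
      ring_nf
    · have h' : ((n : ℕ) : ℤ) = -x := by rw [hn]; omega
      have hxe : ((n : ℕ) : ℂ) = -((x : ℤ) : ℂ) := by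
        rw [show -((x:ℤ):ℂ) = (((-x : ℤ)):ℂ) by push_cast; ring, ← h', Int.cast_natCast]
      have hcn := intervalIntegral.integral_comp_neg
        (fun a : ℝ => Complex.exp (Complex.I * n * a) / ((A - B * Real.cos a : ℝ) : ℂ))
        (a := -π) (b := π)
      rw [neg_neg] at hcn
      rw [← hcn]
      refine intervalIntegral.integral_congr fun a _ => ?_
      rw [hD a, Real.cos_neg]
      congr 1
      rw [Complex.ofReal_neg, hxe]
      ring
  rw [hx, main_nat A B hBne hABlt n]
  -- algebraic identification of the right-hand side
  set X : ℝ := (3 + Real.cos θ) ^ 2 - (1 - Real.cos θ) ^ 2 * Real.cos b ^ 2 with hXdef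
  have hid : A ^ 2 - B ^ 2 = ((1 - Real.cos θ) * Real.sin b) ^ 2 * X := by
    rw [hA, hBdef, hXdef]
    linear_combination (2 * Real.sin b ^ 2 * (2 * Real.sin θ ^ 2 + (1 - Real.cos θ) ^ 2
        + (1 - Real.cos θ) * (3 + Real.cos θ))) * Real.sin_sq_add_cos_sq θ
      + ((1 - Real.cos θ) ^ 4 * Real.sin b ^ 2 - 4 * Real.sin θ ^ 4) * Real.sin_sq_add_cos_sq b
  have hnn : (0:ℝ) ≤ (1 - Real.cos θ) * Real.sin b := by nlinarith
  have hsqrt : Real.sqrt (A ^ 2 - B ^ 2)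
      = (1 - Real.cos θ) * Real.sin b * Real.sqrt X := by
    rw [hid, Real.sqrt_mul (sq_nonneg _), Real.sqrt_sq hnn]
  have hABsq : 0 < A ^ 2 - B ^ 2 := by
    nlinarith [abs_nonneg B, _root_.sq_abs B, lt_of_le_of_lt (abs_nonneg B) hABlt]
  have hXpos : 0 < Real.sqrt X := by
    have h1 : 0 < Real.sqrt (A ^ 2 - B ^ 2) := Real.sqrt_pos.2 hABsq
    rw [hsqrt] at h1
    nlinarith
  rw [hsqrt]
  rw [show (1 : ℂ) / (2 * (π:ℂ)) = ((1 / (2*π) : ℝ) : ℂ) by push_cast; ring,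
    ← Complex.ofReal_mul, Complex.ofReal_inj]
  rw [div_pow]
  have h1c : (0:ℝ) < 1 - Real.cos θ := by linarith
  field_simp
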